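/- Let T : X → X be a bounded linear operator on an infinite dimensional Banach space with C ⊆ O(x,T,d) for an open cone C and d > 0. If y ∈ C and the open ball B(y,3d) is contained in C, then the set O(x,T) ∩ B(y,3d) is infinite. -/

import Mathlib

open Filter Topology

variable {X : Type*} [NormedAddCommGroup X] [NormedSpace ℂ X]

/-- The orbit of `x` under `T`. -/
def orbitSet (T : X →L[ℂ] X) (x : X) : Set X := Set.range fun n : ℕ => (T ^ n) x

/-- The coarse orbit of `x` under `T` with respect to `d`. -/
def coarseOrbit (T : X →L[ℂ] X) (x : X) (d : ℝ) : Set X :=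
  {y | ∃ n : ℕ, ‖(T ^ n) x - y‖ < d}

/-- The extended (prolongational) limit set `J(x,T)`. -/
def jSet (T : X →L[ℂ] X) (x : X) : Set X :=
  {y | ∃ k : ℕ → ℕ, StrictMono k ∧ (∀ n, 0 < k n) ∧
    ∃ u : ℕ → X, Tendsto u atTop (𝓝 x) ∧
      Tendsto (fun n => (T ^ k n) (u n)) atTop (𝓝 y)}

/-- The coarse extended limit set `J(x,T,d)`. -/
def jCoarse (T : X →L[ℂ] X) (x : X) (d : ℝ) : Set X :=
  {y | ∃ k : ℕ → ℕ, StrictMono k ∧ (∀ n, 0 < k n) ∧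
    ∃ u : ℕ → X, Tendsto u atTop (𝓝 x) ∧ ∀ n, ‖(T ^ k n) (u n) - y‖ < d}

/-- The extended mixing limit set `J^{mix}(x,T)`. -/
def jMix (T : X →L[ℂ] X) (x : X) : Set X :=
  {y | ∃ u : ℕ → X, Tendsto u atTop (𝓝 x) ∧
    Tendsto (fun n => (T ^ n) (u n)) atTop (𝓝 y)}

/-- The coarse extended mixing limit set `J^{mix}(x,T,d)`. -/
def jMixCoarse (T : X →L[ℂ] X) (x : X) (d : ℝ) : Set X :=
  {y | ∃ u : ℕ → X, Tendsto u atTop (𝓝 x) ∧ ∀ n, ‖(T ^ n) (u n) - y‖ < d}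

/-- The prolongation `D(x,T) = O(x,T) ∪ J(x,T)`. -/
def dSet (T : X →L[ℂ] X) (x : X) : Set X := orbitSet T x ∪ jSet T x

/-- The coarse prolongation `D(x,T,d) = O(x,T,d) ∪ J(x,T,d)`. -/
def dCoarse (T : X →L[ℂ] X) (x : X) (d : ℝ) : Set X :=
  coarseOrbit T x d ∪ jCoarse T x d

/-- The coarse mixing prolongation `D^{mix}(x,T,d)`. -/
def dMixCoarse (T : X →L[ℂ] X) (x : X) (d : ℝ) : Set X :=
  coarseOrbit T x d ∪ jMixCoarse T x d

/-- An open cone: a nonempty open set invariant under positive scalar multiplication. -/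
def IsOpenCone (C : Set X) : Prop :=
  IsOpen C ∧ C.Nonempty ∧ ∀ x ∈ C, ∀ r : ℝ, 0 < r → (r : ℂ) • x ∈ C

theorem orbit_inter_ball_infinite [CompleteSpace X]
    (hinf : ¬ FiniteDimensional ℂ X)
    (T : X →L[ℂ] X) (x : X) (d : ℝ) (hd : 0 < d)
    (C : Set X) (hC : IsOpenCone C) (hdense : C ⊆ coarseOrbit T x d)
    (y : X) (hy : y ∈ C) (hball : Metric.ball y (3 * d) ⊆ C) :
    (orbitSet T x ∩ Metric.ball y (3 * d)).Infinite := by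
  by_contra hcon
  rw [Set.not_infinite] at hcon
  set S := orbitSet T x ∩ Metric.ball y (3 * d) with hS
  -- every point of `ball y (2d)` is within `d` of an orbit point lying in `ball y (3d)`
  have hcover : Metric.ball y (2 * d) ⊆ ⋃ p ∈ S, Metric.ball p d := by
    intro z hz
    have hz3 : z ∈ Metric.ball y (3 * d) := Metric.ball_subset_ball (by linarith) hz
    obtain ⟨n, hn⟩ := hdense (hball hz3)
    have hdz : dist z ((T ^ n) x) < d := by
      rw [dist_eq_norm, ← norm_neg]; simpa [neg_sub] using hn
    refine Set.mem_iUnion₂.2 ⟨(T ^ n) x, ⟨⟨n, rfl⟩, ?_⟩, Metric.mem_ball.2 hdz⟩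
    have : dist ((T ^ n) x) y < 3 * d := by
      calc dist ((T ^ n) x) y ≤ dist ((T ^ n) x) z + dist z y := dist_triangle _ _ _
        _ < d + 2 * d := by
            have := Metric.mem_ball.1 hz
            rw [dist_comm] at hdz
            linarith
        _ = 3 * d := by ring
    exact Metric.mem_ball.2 this
  -- iterate the cover to get covers at all scales
  have key : ∀ n : ℕ, ∃ G : Set X, G.Finite ∧
      Metric.ball y (2 * d) ⊆ ⋃ g ∈ G, Metric.ball g (2 * d / 2 ^ n) := by
    intro n
    induction n with
    | zero =>
      exact ⟨{y}, Set.finite_singleton y, by simp⟩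
    | succ n ih =>
      obtain ⟨G, hGfin, hGsub⟩ := ih
      refine ⟨(fun p : X × X => p.1 + ((2 : ℝ) ^ n)⁻¹ • (p.2 - y)) '' (G ×ˢ S),
        (hGfin.prod hcon).image _, ?_⟩
      intro z hz
      obtain ⟨g, hg, hzg⟩ := Set.mem_iUnion₂.1 (hGsub hz)
      have hzg' : ‖z - g‖ < 2 * d / 2 ^ n := by
        rw [Metric.mem_ball, dist_eq_norm] at hzg; exact hzg
      have hpow : (0 : ℝ) < 2 ^ n := by positivity
      have hw : y + ((2 : ℝ) ^ n) • (z - g) ∈ Metric.ball y (2 * d) := by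
        rw [Metric.mem_ball, dist_eq_norm]
        have : ‖((2 : ℝ) ^ n) • (z - g)‖ = 2 ^ n * ‖z - g‖ := by
          rw [norm_smul, Real.norm_eq_abs, abs_of_pos hpow]
        rw [add_sub_cancel_left, this]
        calc (2:ℝ) ^ n * ‖z - g‖ < 2 ^ n * (2 * d / 2 ^ n) := by
              exact (mul_lt_mul_iff_right₀ hpow).2 hzg'
          _ = 2 * d := by field_simp
      obtain ⟨p, hpS, hpb⟩ := Set.mem_iUnion₂.1 (hcover hw)
      refine Set.mem_iUnion₂.2 ⟨g + ((2 : ℝ) ^ n)⁻¹ • (p - y),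
        ⟨⟨g, p⟩, ⟨hg, hpS⟩, rfl⟩, ?_⟩
      rw [Metric.mem_ball, dist_eq_norm]
      have hdist : ‖(y + ((2 : ℝ) ^ n) • (z - g)) - p‖ < d := by
        rw [← dist_eq_norm]; exact Metric.mem_ball.1 hpb
      have heq : z - (g + ((2 : ℝ) ^ n)⁻¹ • (p - y)) =
          ((2 : ℝ) ^ n)⁻¹ • ((y + ((2 : ℝ) ^ n) • (z - g)) - p) := by
        have h2 : ((2 : ℝ) ^ n)⁻¹ • (((2 : ℝ) ^ n) • (z - g)) = z - g := by
          rw [smul_smul, inv_mul_cancel₀ hpow.ne', one_smul]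
        rw [smul_sub, smul_sub ((2 : ℝ) ^ n)⁻¹ (y + ((2 : ℝ) ^ n) • (z - g)) p,
          smul_add, h2]
        abel
      rw [heq, norm_smul, Real.norm_eq_abs, abs_of_pos (inv_pos.2 hpow)]
      calc ((2 : ℝ) ^ n)⁻¹ * ‖(y + ((2 : ℝ) ^ n) • (z - g)) - p‖
          < ((2 : ℝ) ^ n)⁻¹ * d := by
            exact (mul_lt_mul_iff_right₀ (inv_pos.2 hpow)).2 hdist
        _ = 2 * d / 2 ^ (n + 1) := by
            rw [pow_succ]; field_simp
  have tb : TotallyBounded (Metric.ball y (2 * d)) := by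
    rw [Metric.totallyBounded_iff]
    intro ε hε
    obtain ⟨n, hn⟩ := pow_unbounded_of_one_lt (2 * d / ε) (by norm_num : (1:ℝ) < 2)
    obtain ⟨G, hGfin, hGsub⟩ := key n
    refine ⟨G, hGfin, hGsub.trans ?_⟩
    refine Set.iUnion₂_mono fun g _ => Metric.ball_subset_ball ?_
    rw [div_le_iff₀ (by positivity)]
    rw [div_lt_iff₀ hε] at hn
    nlinarith
  have hcpt : IsCompact (Metric.closedBall y (2 * d)) := by
    have h1 := TotallyBounded.isCompact_of_isClosed tb.closure isClosed_closure
    rwa [closure_ball y (by positivity : (2 * d) ≠ 0)] at h1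
  exact hinf (FiniteDimensional.of_isCompact_closedBall ℂ (by positivity) hcpt)
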